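/- Let k ≥ 2 be an integer. For every a > 0 and every x > 0 the integral I_a(x) = (1/(2π)) ∫_ℝ Γ(a + k + it) Γ(a + 1/2 + it) Γ(1 − a − it)⁻¹ x^(−(1+a+it)) dt converges absolutely, and its value is independent of a: for all a, a' > 0 and all x > 0, I_a(x) = I_{a'}(x). (This integral is the contour integral (1/(2πi)) ∫_{Re s = 1+a} Γ(s+k−1) Γ(s−1/2) Γ(2−s)⁻¹ x^(−s) ds defining W_k(x).) -/

import Mathlib

open MeasureTheory Real Filter

/-- The integrand of the contour integral `(1/(2πi)) ∫_{Re s = 1+a} Γ(s+k-1) Γ(s-1/2) Γ(2-s)⁻¹ x^(-s) ds`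
parametrized by `s = 1 + a + it`. -/
noncomputable def WkIntegrand (k : ℕ) (a x : ℝ) (t : ℝ) : ℂ :=
  Complex.Gamma ((a : ℂ) + k + t * Complex.I) *
    Complex.Gamma ((a : ℂ) + 1/2 + t * Complex.I) *
    (Complex.Gamma (1 - (a : ℂ) - t * Complex.I))⁻¹ *
    (x : ℂ) ^ (-(1 + (a : ℂ) + t * Complex.I))



section WkAux
open Complex Finset intervalIntegral


lemma normSq_Gamma_half (t : ℝ) :
    ‖Complex.Gamma (1/2 + t * Complex.I)‖ ^ 2 = π / Real.cosh (π * t) := by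
  have h1 : (1 : ℂ) - (1/2 + t * Complex.I) = (starRingEnd ℂ) (1/2 + t * Complex.I) := by
    simp [Complex.ext_iff]; ring
  have h2 := Complex.Gamma_mul_Gamma_one_sub (1/2 + t * Complex.I)
  rw [h1, Complex.Gamma_conj, Complex.mul_conj] at h2
  have h3 : Complex.sin (π * (1/2 + t * Complex.I)) = (Real.cosh (π * t) : ℂ) := by
    rw [mul_add, Complex.sin_add, show (π : ℂ) * (1/2) = π/2 by ring,
      Complex.sin_pi_div_two, Complex.cos_pi_div_two,
      show (π : ℂ) * (t * Complex.I) = (π * t : ℂ) * Complex.I by push_cast; ring,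
      Complex.cos_mul_I]
    push_cast
    ring
  rw [h3] at h2
  have h4 : Complex.normSq (Complex.Gamma (1/2 + t * Complex.I)) = π / Real.cosh (π * t) := by
    have : ((π / Real.cosh (π * t) : ℝ) : ℂ) = (π : ℂ) / (Real.cosh (π * t) : ℂ) := by push_cast; ring
    exact_mod_cast h2.trans this.symm
  rw [← Complex.sq_norm] at h4
  simpa using h4


lemma norm_GammaSeq (s : ℂ) (n : ℕ) (hn : 0 < n) :
    ‖Complex.GammaSeq s n‖ =
      (n : ℝ) ^ s.re * n.factorial / ∏ j ∈ Finset.range (n + 1), ‖s + j‖ := by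
  rw [Complex.GammaSeq, norm_div, norm_mul, norm_prod]
  congr 2
  · exact Complex.norm_cpow_eq_rpow_re_of_pos (by exact_mod_cast hn) s
  · simp

lemma key_factor (u v t : ℝ) (hu : 0 < u) (huv : u ≤ v) :
    u * ‖(v : ℂ) + t * Complex.I‖ ≤ ‖(u : ℂ) + t * Complex.I‖ * v := by
  have hv : 0 < v := lt_of_lt_of_le hu huv
  have h1 : ∀ w : ℝ, ‖(w : ℂ) + t * Complex.I‖ ^ 2 = w ^ 2 + t ^ 2 := fun w => by
    rw [Complex.sq_norm, Complex.normSq_add_mul_I]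
  have hsq : (u * ‖(v : ℂ) + t * Complex.I‖) ^ 2 ≤ (‖(u : ℂ) + t * Complex.I‖ * v) ^ 2 := by
    rw [mul_pow, mul_pow, h1, h1]
    have husq : u ^ 2 ≤ v ^ 2 := by nlinarith
    nlinarith [mul_le_mul_of_nonneg_right husq (sq_nonneg t)]
  have h2 : 0 ≤ u * ‖(v : ℂ) + t * Complex.I‖ := by positivity
  have h3 : 0 ≤ ‖(u : ℂ) + t * Complex.I‖ * v := by positivity
  exact (pow_le_pow_iff_left₀ h2 h3 two_ne_zero).mp hsq

lemma norm_Gamma_mono (σ τ t : ℝ) (h0 : 0 < σ) (h : σ ≤ τ) :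
    ‖Complex.Gamma (σ + t * Complex.I)‖ * Real.Gamma τ ≤
      Real.Gamma σ * ‖Complex.Gamma (τ + t * Complex.I)‖ := by
  have hτ : 0 < τ := lt_of_lt_of_le h0 h
  -- limits
  have lim1 : Tendsto (fun n => ‖Complex.GammaSeq (σ + t * Complex.I) n‖ *
      ‖Complex.GammaSeq (τ : ℂ) n‖) atTop
      (nhds (‖Complex.Gamma (σ + t * Complex.I)‖ * Real.Gamma τ)) := by
    have := ((Complex.GammaSeq_tendsto_Gamma (σ + t * Complex.I)).norm).mul
      ((Complex.GammaSeq_tendsto_Gamma (τ : ℂ)).norm)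
    simpa [Complex.Gamma_ofReal, Complex.norm_real, Real.norm_eq_abs,
      abs_of_pos (Real.Gamma_pos_of_pos hτ)] using this
  have lim2 : Tendsto (fun n => ‖Complex.GammaSeq (σ : ℂ) n‖ *
      ‖Complex.GammaSeq (τ + t * Complex.I) n‖) atTop
      (nhds (Real.Gamma σ * ‖Complex.Gamma (τ + t * Complex.I)‖)) := by
    have := ((Complex.GammaSeq_tendsto_Gamma (σ : ℂ)).norm).mul
      ((Complex.GammaSeq_tendsto_Gamma (τ + t * Complex.I)).norm)
    simpa [Complex.Gamma_ofReal, Complex.norm_real, Real.norm_eq_abs,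
      abs_of_pos (Real.Gamma_pos_of_pos h0)] using this
  refine le_of_tendsto_of_tendsto lim1 lim2 ?_
  filter_upwards [eventually_ge_atTop 1] with n hn
  have hn0 : 0 < n := hn
  have hre1 : (σ + t * Complex.I : ℂ).re = σ := by simp
  have hre2 : (τ + t * Complex.I : ℂ).re = τ := by simp
  rw [norm_GammaSeq _ n hn0, norm_GammaSeq _ n hn0, norm_GammaSeq _ n hn0,
    norm_GammaSeq _ n hn0, hre1, hre2]
  have hσj : ∀ j ∈ Finset.range (n+1), (0:ℝ) < ‖(σ : ℂ) + t * Complex.I + j‖ := by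
    intro j _
    have : ((σ : ℂ) + t * Complex.I + j) ≠ 0 := by
      intro hc
      have := congrArg Complex.re hc
      simp at this
      nlinarith [(Nat.cast_nonneg j : (0:ℝ) ≤ j)]
    simpa [norm_pos_iff] using this
  have hτj : ∀ j ∈ Finset.range (n+1), (0:ℝ) < ‖(τ : ℂ) + t * Complex.I + j‖ := by
    intro j _
    have : ((τ : ℂ) + t * Complex.I + j) ≠ 0 := by
      intro hc
      have := congrArg Complex.re hc
      simp at this
      nlinarith [(Nat.cast_nonneg j : (0:ℝ) ≤ j)]
    simpa [norm_pos_iff] using this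
  have hσr : ∀ j ∈ Finset.range (n+1), (0:ℝ) < ‖(σ : ℂ) + (j:ℂ)‖ := by
    intro j _
    have : ((σ : ℂ) + j) ≠ 0 := by
      intro hc
      have := congrArg Complex.re hc
      simp at this
      nlinarith [(Nat.cast_nonneg j : (0:ℝ) ≤ j)]
    simpa [norm_pos_iff] using this
  have hτr : ∀ j ∈ Finset.range (n+1), (0:ℝ) < ‖(τ : ℂ) + (j:ℂ)‖ := by
    intro j _
    have : ((τ : ℂ) + j) ≠ 0 := by
      intro hc
      have := congrArg Complex.re hc
      simp at this
      nlinarith [(Nat.cast_nonneg j : (0:ℝ) ≤ j)]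
    simpa [norm_pos_iff] using this
  set P1 := ∏ j ∈ Finset.range (n+1), ‖(σ : ℂ) + t * Complex.I + j‖ with hP1
  set P2 := ∏ j ∈ Finset.range (n+1), ‖(τ : ℂ) + (j:ℂ)‖ with hP2
  set P3 := ∏ j ∈ Finset.range (n+1), ‖(σ : ℂ) + (j:ℂ)‖ with hP3
  set P4 := ∏ j ∈ Finset.range (n+1), ‖(τ : ℂ) + t * Complex.I + j‖ with hP4
  have hP1p : 0 < P1 := Finset.prod_pos hσj
  have hP2p : 0 < P2 := Finset.prod_pos hτr
  have hP3p : 0 < P3 := Finset.prod_pos hσr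
  have hP4p : 0 < P4 := Finset.prod_pos hτj
  have num_nonneg : (0:ℝ) ≤ (n : ℝ) ^ σ * n.factorial * ((n : ℝ) ^ τ * n.factorial) := by
    positivity
  have key : P3 * P4 ≤ P1 * P2 := by
    rw [hP1, hP2, hP3, hP4, ← Finset.prod_mul_distrib, ← Finset.prod_mul_distrib]
    refine Finset.prod_le_prod (fun j _ => by positivity) (fun j _ => ?_)
    have hnorm1 : ‖(σ : ℂ) + (j:ℂ)‖ = σ + j := by
      rw [show (σ : ℂ) + (j:ℂ) = ((σ + j : ℝ) : ℂ) by push_cast; ring, Complex.norm_real]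
      exact abs_of_pos (by positivity)
    have hnorm2 : ‖(τ : ℂ) + (j:ℂ)‖ = τ + j := by
      rw [show (τ : ℂ) + (j:ℂ) = ((τ + j : ℝ) : ℂ) by push_cast; ring, Complex.norm_real]
      exact abs_of_pos (by positivity)
    have e1 : (σ : ℂ) + t * Complex.I + j = ((σ + j : ℝ) : ℂ) + t * Complex.I := by
      push_cast; ring
    have e2 : (τ : ℂ) + t * Complex.I + j = ((τ + j : ℝ) : ℂ) + t * Complex.I := by
      push_cast; ring
    rw [hnorm1, hnorm2, e1, e2]
    have := key_factor (σ + j) (τ + j) t (by positivity) (by linarith)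
    linarith
  rw [div_mul_div_comm, div_mul_div_comm]
  exact (div_le_div_iff_of_pos_left (by positivity) (by positivity) (by positivity)).mpr key

lemma norm_Gamma_half_le (t : ℝ) :
    ‖Complex.Gamma (1/2 + t * Complex.I)‖ ≤ Real.sqrt (2*π) * Real.exp (-(π/2) * |t|) := by
  have hcosh : Real.exp (π * |t|) / 2 ≤ Real.cosh (π * t) := by
    rw [Real.cosh_eq]
    rcases abs_cases t with ⟨h1, _⟩ | ⟨h1, _⟩
    · rw [h1]
      have := Real.exp_pos (-(π * t))
      linarith
    · rw [h1, show π * -t = -(π * t) by ring]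
      have := Real.exp_pos (π * t)
      linarith
  have h2 : ‖Complex.Gamma (1/2 + t * Complex.I)‖ ^ 2 ≤ 2 * π * Real.exp (-(π * |t|)) := by
    rw [normSq_Gamma_half]
    rw [div_le_iff₀ (Real.cosh_pos _)]
    have h3 : Real.exp (-(π * |t|)) * (Real.exp (π * |t|) / 2) = 1/2 := by
      rw [div_eq_mul_inv, ← mul_assoc, ← Real.exp_add, neg_add_cancel, Real.exp_zero, one_mul]
      norm_num
    calc π = 2 * π * (1/2) := by ring
    _ = 2 * π * (Real.exp (-(π * |t|)) * (Real.exp (π * |t|) / 2)) := by rw [h3]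
    _ ≤ 2 * π * (Real.exp (-(π * |t|)) * Real.cosh (π * t)) := by
        have he := Real.exp_pos (-(π * |t|))
        have hπ := Real.pi_pos
        have := mul_le_mul_of_nonneg_left hcosh he.le
        nlinarith
    _ = 2 * π * Real.exp (-(π * |t|)) * Real.cosh (π * t) := by ring
  have h4 : ‖Complex.Gamma (1/2 + t * Complex.I)‖ ≤
      Real.sqrt (2 * π * Real.exp (-(π * |t|))) := by
    have := Real.sqrt_le_sqrt h2
    rwa [Real.sqrt_sq (norm_nonneg _)] at this
  refine h4.trans_eq ?_
  rw [Real.sqrt_mul (by positivity), ← Real.exp_half]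
  ring_nf

lemma norm_Gamma_nat_half_le (m : ℕ) (t : ℝ) :
    ‖Complex.Gamma (((m : ℝ) + 1/2 : ℝ) + t * Complex.I)‖ ≤
      ((m : ℝ) + 1/2 + |t|) ^ m * ‖Complex.Gamma ((1/2 : ℝ) + t * Complex.I)‖ := by
  induction m with
  | zero => simp
  | succ m ih =>
      have hz : (((m : ℝ) + 1/2 : ℝ) : ℂ) + t * Complex.I ≠ 0 := by
        intro hc
        have := congrArg Complex.re hc
        simp at this
        nlinarith [(Nat.cast_nonneg m : (0:ℝ) ≤ m)]
      have he : ((((m+1 : ℕ) : ℝ) + 1/2 : ℝ) : ℂ) + t * Complex.I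
          = ((((m : ℝ) + 1/2 : ℝ) : ℂ) + t * Complex.I) + 1 := by
        push_cast; ring
      rw [he, Complex.Gamma_add_one _ hz, norm_mul]
      have hnz : ‖(((m : ℝ) + 1/2 : ℝ) : ℂ) + t * Complex.I‖ ≤ (m : ℝ) + 1/2 + |t| := by
        refine (norm_add_le _ _).trans ?_
        rw [Complex.norm_real, norm_mul, Complex.norm_I, mul_one, Complex.norm_real,
          Real.norm_eq_abs, Real.norm_eq_abs,
          _root_.abs_of_nonneg (show (0:ℝ) ≤ (m:ℝ) + 1/2 by positivity)]
      have hb : (m : ℝ) + 1/2 + |t| ≤ ((m+1 : ℕ) : ℝ) + 1/2 + |t| := by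
        push_cast; linarith
      have h1 : ((m:ℝ) + 1/2 + |t|) ^ m ≤ (((m+1:ℕ):ℝ) + 1/2 + |t|) ^ m :=
        pow_le_pow_left₀ (by positivity) hb m
      have h2 : (0:ℝ) ≤ ‖Complex.Gamma ((1/2 : ℝ) + t * Complex.I)‖ := norm_nonneg _
      calc ‖(((m : ℝ) + 1/2 : ℝ) : ℂ) + t * Complex.I‖ *
            ‖Complex.Gamma ((((m : ℝ) + 1/2 : ℝ) : ℂ) + t * Complex.I)‖
          ≤ ((m:ℝ) + 1/2 + |t|) * (((m : ℝ) + 1/2 + |t|) ^ m *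
              ‖Complex.Gamma ((1/2 : ℝ) + t * Complex.I)‖) :=
            mul_le_mul hnz ih (by positivity) (by positivity)
        _ ≤ ((m:ℝ) + 1/2 + |t|) * ((((m+1:ℕ):ℝ) + 1/2 + |t|) ^ m *
              ‖Complex.Gamma ((1/2 : ℝ) + t * Complex.I)‖) :=
            mul_le_mul_of_nonneg_left (mul_le_mul_of_nonneg_right h1 h2) (by positivity)
        _ ≤ (((m+1:ℕ):ℝ) + 1/2 + |t|) * ((((m+1:ℕ):ℝ) + 1/2 + |t|) ^ m *
              ‖Complex.Gamma ((1/2 : ℝ) + t * Complex.I)‖) :=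
            mul_le_mul_of_nonneg_right hb (by positivity)
        _ = (((m+1:ℕ):ℝ) + 1/2 + |t|) ^ (m+1) *
              ‖Complex.Gamma ((1/2 : ℝ) + t * Complex.I)‖ := by ring

lemma poly_absorb (B ε : ℝ) (hB : 0 ≤ B) (hε : 0 < ε) (N : ℕ) (u : ℝ) (hu : 0 ≤ u) :
    (B + u) ^ N ≤ (B + N / ε) ^ N * Real.exp (ε * u) := by
  rcases Nat.eq_zero_or_pos N with h0 | h0
  · subst h0; simpa using Real.one_le_exp (by positivity)
  have hN : (0:ℝ) < N := by exact_mod_cast h0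
  have key : B + u ≤ (B + N / ε) * Real.exp (ε * u / N) := by
    have h1 : 1 + ε * u / N ≤ Real.exp (ε * u / N) := by
      have := Real.add_one_le_exp (ε * u / N)
      linarith
    have h2 : (B + N / ε) * (1 + ε * u / N) ≤ (B + N / ε) * Real.exp (ε * u / N) :=
      mul_le_mul_of_nonneg_left h1 (by positivity)
    refine le_trans ?_ h2
    have he : (B + N / ε) * (1 + ε * u / N) = B + N/ε + B * (ε*u/N) + u := by
      field_simp; ring
    rw [he]
    have i1 : 0 ≤ B * (ε * u / N) := by positivity
    have i2 : 0 ≤ (N:ℝ) / ε := by positivity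
    linarith
  calc (B + u) ^ N ≤ ((B + N / ε) * Real.exp (ε * u / N)) ^ N :=
      pow_le_pow_left₀ (by positivity) key N
    _ = (B + N / ε) ^ N * Real.exp (ε * u / N) ^ N := mul_pow _ _ _
    _ = (B + N / ε) ^ N * Real.exp (ε * u) := by
        rw [← Real.exp_nat_mul]
        congr 2
        field_simp

lemma Gamma_strip_bound (σ₀ σ₁ ε : ℝ) (h0 : 0 < σ₀) (hε : 0 < ε) :
    ∃ C : ℝ, 0 < C ∧ ∀ σ ∈ Set.Icc σ₀ σ₁, ∀ t : ℝ,
      ‖Complex.Gamma ((σ : ℂ) + t * Complex.I)‖ ≤ C * Real.exp ((ε - π/2) * |t|) := by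
  obtain ⟨m, hm⟩ := exists_nat_ge σ₁
  set τ := (m : ℝ) + 1/2 with hτdef
  have hτpos : 0 < τ := by positivity
  have hΓτ : 0 < Real.Gamma τ := Real.Gamma_pos_of_pos hτpos
  -- bound for Real.Gamma on the interval
  obtain ⟨Cg, hCg⟩ : ∃ Cg : ℝ, ∀ σ ∈ Set.Icc σ₀ σ₁, Real.Gamma σ ≤ Cg := by
    rcases le_or_gt σ₀ σ₁ with hle | hlt
    · have hcont : ContinuousOn Real.Gamma (Set.Icc σ₀ σ₁) := by
        intro σ hσ
        have : ∀ n : ℕ, σ ≠ -n := by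
          intro n
          have : 0 < σ := lt_of_lt_of_le h0 hσ.1
          intro hc
          rw [hc] at this
          have : (0:ℝ) ≤ n := Nat.cast_nonneg n
          linarith
        exact (Real.differentiableAt_Gamma this).continuousAt.continuousWithinAt
      obtain ⟨z, _, hz⟩ := isCompact_Icc.exists_isMaxOn (Set.nonempty_Icc.2 hle) hcont
      exact ⟨Real.Gamma z, fun σ hσ => hz hσ⟩
    · exact ⟨1, fun σ hσ => absurd (hσ.1.trans hσ.2) (not_le.2 hlt)⟩
  set C : ℝ := (max Cg 1) / Real.Gamma τ * ((τ + m / ε) ^ m * Real.sqrt (2*π)) with hCdef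
  refine ⟨C, by positivity, fun σ hσ t => ?_⟩
  have hσpos : 0 < σ := lt_of_lt_of_le h0 hσ.1
  have hστ : σ ≤ τ := by
    have := hσ.2.trans hm
    simp only [hτdef]; linarith
  have step1 : ‖Complex.Gamma ((σ : ℂ) + t * Complex.I)‖ ≤
      Real.Gamma σ * ‖Complex.Gamma ((τ : ℂ) + t * Complex.I)‖ / Real.Gamma τ := by
    rw [le_div_iff₀ hΓτ]
    exact norm_Gamma_mono σ τ t hσpos hστ
  have step2 : ‖Complex.Gamma ((τ : ℂ) + t * Complex.I)‖ ≤
      (τ + |t|) ^ m * (Real.sqrt (2*π) * Real.exp (-(π/2) * |t|)) := by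
    refine (norm_Gamma_nat_half_le m t).trans ?_
    have hc : (((1:ℝ)/2 : ℝ) : ℂ) = (1/2 : ℂ) := by norm_num
    rw [hc]
    exact mul_le_mul_of_nonneg_left (norm_Gamma_half_le t) (by positivity)
  have step3 : (τ + |t|) ^ m ≤ (τ + m / ε) ^ m * Real.exp (ε * |t|) :=
    poly_absorb τ ε hτpos.le hε m |t| (abs_nonneg t)
  have hΓσ : Real.Gamma σ ≤ max Cg 1 := (hCg σ hσ).trans (le_max_left _ _)
  have hΓσ0 : 0 ≤ Real.Gamma σ := (Real.Gamma_pos_of_pos hσpos).le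
  calc ‖Complex.Gamma ((σ : ℂ) + t * Complex.I)‖
      ≤ Real.Gamma σ * ‖Complex.Gamma ((τ : ℂ) + t * Complex.I)‖ / Real.Gamma τ := step1
    _ ≤ Real.Gamma σ * ((τ + |t|) ^ m * (Real.sqrt (2*π) * Real.exp (-(π/2) * |t|))) / Real.Gamma τ := by
        gcongr
    _ ≤ Real.Gamma σ * (((τ + m / ε) ^ m * Real.exp (ε * |t|)) * (Real.sqrt (2*π) * Real.exp (-(π/2) * |t|))) / Real.Gamma τ := by
        gcongr
    _ ≤ (max Cg 1) * (((τ + m / ε) ^ m * Real.exp (ε * |t|)) * (Real.sqrt (2*π) * Real.exp (-(π/2) * |t|))) / Real.Gamma τ := by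
        gcongr
    _ = C * Real.exp ((ε - π/2) * |t|) := by
        rw [hCdef]
        rw [show (ε - π/2) * |t| = ε * |t| + (-(π/2) * |t|) by ring, Real.exp_add]
        field_simp

lemma integrable_exp_neg_abs' : MeasureTheory.Integrable (fun t : ℝ => Real.exp (-|t|)) := by
  have h1 : MeasureTheory.IntegrableOn (fun t : ℝ => Real.exp (-|t|)) (Set.Ioi 0) := by
    refine (exp_neg_integrableOn_Ioi 0 one_pos).congr_fun (fun x hx => ?_) measurableSet_Ioi
    rw [abs_of_pos hx]; ring_nf
  have h2 : MeasureTheory.IntegrableOn (fun t : ℝ => Real.exp (-|t|)) (Set.Iic 0) := by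
    refine (integrableOn_exp_Iic 0).congr_fun (fun x hx => ?_) measurableSet_Iic
    rw [abs_of_nonpos hx, neg_neg]
  have := h2.union h1
  rw [Set.Iic_union_Ioi] at this
  rwa [← MeasureTheory.integrableOn_univ]

lemma norm_sin_le (z : ℂ) : ‖Complex.sin z‖ ≤ Real.exp |z.im| := by
  rw [Complex.sin]
  have h1 : ‖Complex.exp (-z * Complex.I) - Complex.exp (z * Complex.I)‖ ≤
      Real.exp z.im + Real.exp (-z.im) := by
    refine (norm_sub_le _ _).trans ?_
    rw [Complex.norm_exp, Complex.norm_exp]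
    have e1 : (-z * Complex.I).re = z.im := by simp
    have e2 : (z * Complex.I).re = -z.im := by simp
    rw [e1, e2]
  rw [norm_div, norm_mul, Complex.norm_I, mul_one]
  have h2 : ‖(2:ℂ)‖ = 2 := by norm_num
  rw [h2]
  have h3 : Real.exp z.im ≤ Real.exp |z.im| := Real.exp_le_exp.2 (le_abs_self _)
  have h4 : Real.exp (-z.im) ≤ Real.exp |z.im| := Real.exp_le_exp.2 (neg_le_abs _)
  calc ‖Complex.exp (-z * Complex.I) - Complex.exp (z * Complex.I)‖ / 2
      ≤ (Real.exp z.im + Real.exp (-z.im)) / 2 := by linarith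
    _ ≤ Real.exp |z.im| := by linarith

lemma inv_Gamma_one_sub_bound (s : ℂ) (hre : 0 < s.re) :
    ‖(Complex.Gamma (1 - s))⁻¹‖ ≤ ‖Complex.Gamma s‖ * Real.exp (π * |s.im|) / π := by
  by_cases h : Complex.Gamma (1 - s) = 0
  · rw [h, inv_zero, norm_zero]
    positivity
  · have hΓs : Complex.Gamma s ≠ 0 := by
      refine Complex.Gamma_ne_zero (fun m => ?_)
      intro hc
      rw [hc] at hre
      simp at hre
      have : (0:ℝ) ≤ m := Nat.cast_nonneg m
      linarith
    have hrefl := Complex.Gamma_mul_Gamma_one_sub s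
    have hsin : Complex.sin (π * s) ≠ 0 := by
      intro hc
      rw [hc, div_zero] at hrefl
      exact (mul_ne_zero hΓs h) hrefl
    have hid : (Complex.Gamma (1 - s))⁻¹ = Complex.Gamma s * Complex.sin (π * s) / π := by
      have hπ : (π : ℂ) ≠ 0 := by
        exact_mod_cast Real.pi_ne_zero
      have h2 : Complex.Gamma s * Complex.sin (π * s) * Complex.Gamma (1 - s) = π := by
        have h3 : Complex.Gamma s * Complex.Gamma (1 - s) * Complex.sin (π * s) = π := by
          rw [hrefl, div_mul_cancel₀ _ hsin]
        linear_combination h3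
      rw [eq_div_iff hπ, inv_mul_eq_div, div_eq_iff h]
      linear_combination -h2
    rw [hid, norm_div, norm_mul]
    have hπn : ‖(π : ℂ)‖ = π := by
      rw [Complex.norm_real, Real.norm_eq_abs, _root_.abs_of_pos Real.pi_pos]
    rw [hπn]
    have hs : ‖Complex.sin (π * s)‖ ≤ Real.exp (π * |s.im|) := by
      have := norm_sin_le ((π : ℂ) * s)
      have him : ((π : ℂ) * s).im = π * s.im := by simp
      rw [him] at this
      refine this.trans (Real.exp_le_exp.2 ?_)
      rw [abs_mul, _root_.abs_of_pos Real.pi_pos]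
    gcongr

noncomputable def Fk (k : ℕ) (x : ℝ) (s : ℂ) : ℂ :=
  Complex.Gamma (s + k - 1) * Complex.Gamma (s - 1/2) * (Complex.Gamma (2 - s))⁻¹ *
    (x : ℂ) ^ (-s)

lemma Wk_eq_Fk (k : ℕ) (a x t : ℝ) :
    WkIntegrand k a x t = Fk k x (((1 + a : ℝ) : ℂ) + t * Complex.I) := by
  unfold WkIntegrand Fk
  push_cast
  ring_nf

lemma Fk_strip_bound (k : ℕ) (x a a' : ℝ) (ha : 0 < a) (haa : a ≤ a') (hx : 0 < x) :
    ∃ K : ℝ, 0 < K ∧ ∀ σ ∈ Set.Icc (1+a) (1+a'), ∀ t : ℝ,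
      ‖Fk k x ((σ : ℂ) + t * Complex.I)‖ ≤ K * Real.exp (-|t|) := by
  have hπ2 : (2:ℝ) < π := by linarith [Real.pi_gt_three]
  set ε : ℝ := (π/2 - 1)/3 with hεdef
  have hε : 0 < ε := by simp only [hεdef]; linarith
  obtain ⟨C1, hC1p, hC1⟩ := Gamma_strip_bound (a + k) (a' + k) ε (by positivity) hε
  obtain ⟨C2, hC2p, hC2⟩ := Gamma_strip_bound (a + 1/2) (a' + 1/2) ε (by positivity) hε
  obtain ⟨C3, hC3p, hC3⟩ := Gamma_strip_bound a a' ε ha hε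
  set X : ℝ := Real.exp (|Real.log x| * (1 + a')) with hXdef
  have hXp : 0 < X := Real.exp_pos _
  refine ⟨C1 * C2 * C3 * X / π, by positivity, fun σ hσ t => ?_⟩
  have hσ1 : 1 + a ≤ σ := hσ.1
  have hσ2 : σ ≤ 1 + a' := hσ.2
  set s : ℂ := (σ : ℂ) + t * Complex.I with hsdef
  have e1 : s + k - 1 = ((σ + k - 1 : ℝ) : ℂ) + t * Complex.I := by
    rw [hsdef]; push_cast; ring
  have e2 : s - 1/2 = ((σ - 1/2 : ℝ) : ℂ) + t * Complex.I := by
    rw [hsdef]; push_cast; ring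
  have e3 : s - 1 = ((σ - 1 : ℝ) : ℂ) + t * Complex.I := by
    rw [hsdef]; push_cast; ring
  have b1 : ‖Complex.Gamma (s + k - 1)‖ ≤ C1 * Real.exp ((ε - π/2) * |t|) := by
    rw [e1]
    refine hC1 (σ + k - 1) ⟨?_, ?_⟩ t
    · have : (0:ℝ) ≤ k := Nat.cast_nonneg k
      linarith
    · linarith
  have b2 : ‖Complex.Gamma (s - 1/2)‖ ≤ C2 * Real.exp ((ε - π/2) * |t|) := by
    rw [e2]
    exact hC2 (σ - 1/2) ⟨by linarith, by linarith⟩ t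
  have b3 : ‖(Complex.Gamma (2 - s))⁻¹‖ ≤
      C3 * Real.exp ((ε - π/2) * |t|) * Real.exp (π * |t|) / π := by
    have him : (s - 1).im = t := by rw [e3]; simp
    have hre : 0 < (s - 1).re := by
      rw [e3]; simp; linarith
    have h1sub : (1 : ℂ) - (s - 1) = 2 - s := by ring
    have := inv_Gamma_one_sub_bound (s - 1) hre
    rw [h1sub, him] at this
    refine this.trans ?_
    have hΓb : ‖Complex.Gamma (s - 1)‖ ≤ C3 * Real.exp ((ε - π/2) * |t|) := by
      rw [e3]
      exact hC3 (σ - 1) ⟨by linarith, by linarith⟩ t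
    gcongr
  have b4 : ‖(x : ℂ) ^ (-s)‖ ≤ X := by
    have habs : ‖(x : ℂ) ^ (-s)‖ = x ^ (-s).re :=
      Complex.norm_cpow_eq_rpow_re_of_pos hx (-s)
    have hres : (-s).re = -σ := by rw [hsdef]; simp
    rw [habs, hres,
      Real.rpow_def_of_pos hx, hXdef]
    refine Real.exp_le_exp.2 ?_
    have h1 : Real.log x * -σ ≤ |Real.log x| * σ := by
      rcases le_or_gt 0 (Real.log x) with h | h
      · nlinarith [_root_.abs_of_nonneg h, le_abs_self (Real.log x)]
      · rw [_root_.abs_of_neg h]; nlinarith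
    refine h1.trans ?_
    have : (0:ℝ) ≤ |Real.log x| := abs_nonneg _
    nlinarith
  have hexp : C1 * Real.exp ((ε - π/2) * |t|) * (C2 * Real.exp ((ε - π/2) * |t|)) *
      (C3 * Real.exp ((ε - π/2) * |t|) * Real.exp (π * |t|) / π) * X
      = C1 * C2 * C3 * X / π * Real.exp (-|t|) := by
    rw [show (-|t|) = (ε - π/2) * |t| + ((ε - π/2) * |t| + ((ε - π/2) * |t| + π * |t|)) by
      rw [hεdef]; ring]
    rw [Real.exp_add, Real.exp_add, Real.exp_add]
    field_simp
  calc ‖Fk k x s‖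
      = ‖Complex.Gamma (s + k - 1)‖ * ‖Complex.Gamma (s - 1/2)‖ *
          ‖(Complex.Gamma (2 - s))⁻¹‖ * ‖(x : ℂ) ^ (-s)‖ := by
        unfold Fk
        rw [norm_mul, norm_mul, norm_mul]
    _ ≤ C1 * Real.exp ((ε - π/2) * |t|) * (C2 * Real.exp ((ε - π/2) * |t|)) *
          (C3 * Real.exp ((ε - π/2) * |t|) * Real.exp (π * |t|) / π) * X := by
        have n1 : (0:ℝ) ≤ ‖Complex.Gamma (s + k - 1)‖ := norm_nonneg _
        gcongr <;> positivity
    _ = C1 * C2 * C3 * X / π * Real.exp (-|t|) := hexp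

lemma Fk_differentiableAt (k : ℕ) (hk : 1 ≤ k) (x : ℝ) (hx : 0 < x) {s : ℂ}
    (hs : 1 < s.re) : DifferentiableAt ℂ (Fk k x) s := by
  have h1 : DifferentiableAt ℂ (fun s : ℂ => Complex.Gamma (s + k - 1)) s := by
    have hne : ∀ m : ℕ, s + k - 1 ≠ -m := by
      intro m hc
      have := congrArg Complex.re hc
      simp at this
      have hk' : (1:ℝ) ≤ k := by exact_mod_cast hk
      have : (0:ℝ) ≤ m := Nat.cast_nonneg m
      linarith
    exact (Complex.differentiableAt_Gamma _ hne).comp s (by fun_prop)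
  have h2 : DifferentiableAt ℂ (fun s : ℂ => Complex.Gamma (s - 1/2)) s := by
    have hne : ∀ m : ℕ, s - 1/2 ≠ -m := by
      intro m hc
      have := congrArg Complex.re hc
      simp at this
      have : (0:ℝ) ≤ m := Nat.cast_nonneg m
      linarith
    exact (Complex.differentiableAt_Gamma _ hne).comp s (by fun_prop)
  have h3 : DifferentiableAt ℂ (fun s : ℂ => (Complex.Gamma (2 - s))⁻¹) s :=
    (Complex.differentiable_one_div_Gamma (2 - s)).comp s (by fun_prop)
  have h4 : DifferentiableAt ℂ (fun s : ℂ => (x : ℂ) ^ (-s)) s := by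
    have hx0 : (x : ℂ) ≠ 0 := by
      exact_mod_cast ne_of_gt hx
    exact (differentiableAt_id.neg).const_cpow (Or.inl hx0)
  exact ((h1.mul h2).mul h3).mul h4

lemma Fk_continuous_vert (k : ℕ) (hk : 1 ≤ k) (x σ : ℝ) (hx : 0 < x) (hσ : 1 < σ) :
    Continuous (fun t : ℝ => Fk k x ((σ : ℂ) + t * Complex.I)) := by
  refine continuous_iff_continuousAt.2 (fun t => ?_)
  have hre : (1:ℝ) < ((σ : ℂ) + t * Complex.I).re := by simpa using hσ
  exact ContinuousAt.comp (Fk_differentiableAt k hk x hx hre).continuousAt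
    (f := fun t : ℝ => (σ : ℂ) + t * Complex.I) (by fun_prop)

lemma integrable_Wk (k : ℕ) (hk : 1 ≤ k) (a x : ℝ) (ha : 0 < a) (hx : 0 < x) :
    MeasureTheory.Integrable (WkIntegrand k a x) := by
  obtain ⟨K, hKp, hK⟩ := Fk_strip_bound k x a a ha le_rfl hx
  have hcont : Continuous (WkIntegrand k a x) := by
    have := Fk_continuous_vert k hk x (1 + a) hx (by linarith)
    refine this.congr (fun t => ?_)
    exact (Wk_eq_Fk k a x t).symm
  refine MeasureTheory.Integrable.mono' (integrable_exp_neg_abs'.const_mul K)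
    hcont.aestronglyMeasurable ?_
  refine Filter.Eventually.of_forall (fun t => ?_)
  rw [Wk_eq_Fk]
  exact hK (1 + a) ⟨le_rfl, le_rfl⟩ t

open intervalIntegral in
lemma integral_shift (k : ℕ) (hk : 1 ≤ k) (a a' x : ℝ) (ha : 0 < a) (haa : a ≤ a')
    (hx : 0 < x) :
    (∫ t : ℝ, WkIntegrand k a x t) = ∫ t : ℝ, WkIntegrand k a' x t := by
  have ha' : 0 < a' := lt_of_lt_of_le ha haa
  set b : ℝ := 1 + a with hbdef
  set b' : ℝ := 1 + a' with hb'def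
  have hbb' : b ≤ b' := by simp only [hbdef, hb'def]; linarith
  obtain ⟨K, hKp, hK⟩ := Fk_strip_bound k x a a' ha haa hx
  have key : ∀ T : ℝ,
      Complex.I * (∫ t in -T..T, Fk k x ((b' : ℂ) + t * Complex.I)) -
        Complex.I * (∫ t in -T..T, Fk k x ((b : ℂ) + t * Complex.I))
      = (∫ σ in b..b', Fk k x ((σ : ℂ) + (T : ℂ) * Complex.I)) -
        (∫ σ in b..b', Fk k x ((σ : ℂ) + ((-T : ℝ) : ℂ) * Complex.I)) := by
    intro T
    have hdiff : DifferentiableOn ℂ (Fk k x)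
        (Set.uIcc (((b : ℂ) - T * Complex.I).re) (((b' : ℂ) + T * Complex.I).re) ×ℂ
          Set.uIcc (((b : ℂ) - T * Complex.I).im) (((b' : ℂ) + T * Complex.I).im)) := by
      intro s hs
      rw [Complex.mem_reProdIm] at hs
      have hre : s.re ∈ Set.uIcc b b' := by simpa using hs.1
      rw [Set.uIcc_of_le hbb'] at hre
      have h1 : 1 < s.re := by
        have := hre.1
        simp only [hbdef] at this
        linarith
      exact (Fk_differentiableAt k hk x hx h1).differentiableWithinAt
    have C := Complex.integral_boundary_rect_eq_zero_of_differentiableOn (Fk k x)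
      ((b : ℂ) - T * Complex.I) ((b' : ℂ) + T * Complex.I) hdiff
    simp only [Complex.sub_re, Complex.add_re, Complex.ofReal_re, Complex.mul_re,
      Complex.I_re, Complex.I_im, Complex.ofReal_im, Complex.mul_im, Complex.sub_im,
      Complex.add_im, mul_zero, mul_one, zero_mul, sub_zero, zero_sub, add_zero, zero_add,
      smul_eq_mul] at C
    push_cast at C ⊢
    linear_combination C
  -- vertical limits
  have hv : ∀ c : ℝ, 0 < c → Tendsto
      (fun T : ℝ => ∫ t in -T..T, Fk k x (((1 + c : ℝ) : ℂ) + t * Complex.I)) atTop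
      (nhds (∫ t : ℝ, WkIntegrand k c x t)) := by
    intro c hc
    have hi := integrable_Wk k hk c x hc hx
    have h := MeasureTheory.intervalIntegral_tendsto_integral hi tendsto_neg_atTop_atBot tendsto_id
    refine h.congr (fun T => ?_)
    exact intervalIntegral.integral_congr (fun t _ => Wk_eq_Fk k c x t)
  -- horizontal bound
  have hhb : ∀ y : ℝ, ‖∫ σ in b..b', Fk k x ((σ : ℂ) + (y : ℂ) * Complex.I)‖ ≤
      K * Real.exp (-|y|) * |b' - b| := by
    intro y
    refine intervalIntegral.norm_integral_le_of_norm_le_const (fun σ hσ => ?_)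
    rw [Set.uIoc_of_le hbb'] at hσ
    exact hK σ ⟨le_of_lt hσ.1, hσ.2⟩ y
  have hexp0 : Tendsto (fun T : ℝ => Real.exp (-|T|)) atTop (nhds 0) := by
    refine Real.tendsto_exp_atBot.comp ?_
    exact tendsto_neg_atBot_iff.mpr tendsto_abs_atTop_atTop
  have hhor : Tendsto (fun T : ℝ =>
      (∫ σ in b..b', Fk k x ((σ : ℂ) + (T : ℂ) * Complex.I)) -
        (∫ σ in b..b', Fk k x ((σ : ℂ) + ((-T : ℝ) : ℂ) * Complex.I))) atTop (nhds 0) := by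
    have hg : Tendsto (fun T : ℝ => 2 * (K * Real.exp (-|T|) * |b' - b|)) atTop (nhds 0) := by
      have := ((hexp0.const_mul K).mul_const |b' - b|).const_mul 2
      simpa using this
    refine squeeze_zero_norm (fun T => ?_) hg
    have h1 := hhb T
    have h2 := hhb (-T)
    rw [abs_neg] at h2
    calc ‖(∫ σ in b..b', Fk k x ((σ : ℂ) + (T : ℂ) * Complex.I)) -
          (∫ σ in b..b', Fk k x ((σ : ℂ) + ((-T : ℝ) : ℂ) * Complex.I))‖
        ≤ ‖∫ σ in b..b', Fk k x ((σ : ℂ) + (T : ℂ) * Complex.I)‖ +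
          ‖∫ σ in b..b', Fk k x ((σ : ℂ) + ((-T : ℝ) : ℂ) * Complex.I)‖ := norm_sub_le _ _
      _ ≤ K * Real.exp (-|T|) * |b' - b| + K * Real.exp (-|T|) * |b' - b| := add_le_add h1 h2
      _ = 2 * (K * Real.exp (-|T|) * |b' - b|) := by ring
  have hlim : Tendsto (fun T : ℝ =>
      Complex.I * (∫ t in -T..T, Fk k x ((b' : ℂ) + t * Complex.I)) -
        Complex.I * (∫ t in -T..T, Fk k x ((b : ℂ) + t * Complex.I))) atTop
      (nhds (Complex.I * (∫ t : ℝ, WkIntegrand k a' x t) -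
        Complex.I * (∫ t : ℝ, WkIntegrand k a x t))) := by
    have h1 := (hv a' ha').const_mul Complex.I
    have h2 := (hv a ha).const_mul Complex.I
    rw [← hb'def] at h1
    rw [← hbdef] at h2
    exact h1.sub h2
  have heq0 : Complex.I * (∫ t : ℝ, WkIntegrand k a' x t) -
      Complex.I * (∫ t : ℝ, WkIntegrand k a x t) = 0 := by
    refine tendsto_nhds_unique ?_ hhor
    exact hlim.congr (fun T => key T)
  have : (∫ t : ℝ, WkIntegrand k a' x t) = (∫ t : ℝ, WkIntegrand k a x t) := by
    have h := sub_eq_zero.mp heq0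
    exact mul_left_cancel₀ Complex.I_ne_zero h
  exact this.symm

end WkAux

/-- for every `a > 0` and `x > 0` the integral
`I_a(x) = (1/(2π)) ∫_ℝ Γ(a+k+it) Γ(a+1/2+it) Γ(1-a-it)⁻¹ x^(-(1+a+it)) dt`
converges absolutely, and its value is independent of `a`. -/
theorem Wk_integral_wellDefined (k : ℕ) (hk : 2 ≤ k) :
    (∀ a x : ℝ, 0 < a → 0 < x → MeasureTheory.Integrable (WkIntegrand k a x)) ∧
    (∀ a a' x : ℝ, 0 < a → 0 < a' → 0 < x →
      (1 / (2 * Real.pi) : ℂ) * ∫ t : ℝ, WkIntegrand k a x t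
        = (1 / (2 * Real.pi) : ℂ) * ∫ t : ℝ, WkIntegrand k a' x t) := by
  have hk1 : 1 ≤ k := le_trans one_le_two hk
  constructor
  · exact fun a x ha hx => integrable_Wk k hk1 a x ha hx
  · intro a a' x ha ha' hx
    rcases le_total a a' with h | h
    · rw [integral_shift k hk1 a a' x ha h hx]
    · rw [integral_shift k hk1 a' a x ha' h hx]
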